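/- Let L = 1 − 1/log 3 and define A : [1,∞) → ℝ by A(x) = (x/(x+L))^{x−1}. Then A is strictly decreasing on [1,∞); consequently e^{−L} < A(x) for every x ≥ 1, and the infimum of A over [1,∞) equals e^{−L}. -/

import Mathlib

open Real Filter Set Topology

-- general auxiliary lemmas with L an arbitrary positive real

private lemma aux_hasDerivAt {L : ℝ} (hL : 0 < L) {x : ℝ} (hx : 0 < x) :
    HasDerivAt (fun y : ℝ => (y - 1) * (Real.log y - Real.log (y + L)))
      ((Real.log x - Real.log (x + L)) + (x - 1) * (1 / x - 1 / (x + L))) x := by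
  have hxL : 0 < x + L := by linarith
  have h1 : HasDerivAt (fun y : ℝ => y - 1) 1 x := (hasDerivAt_id x).sub_const 1
  have h2 : HasDerivAt Real.log (1 / x) x := by
    simpa [one_div] using Real.hasDerivAt_log hx.ne'
  have h3 : HasDerivAt (fun y : ℝ => Real.log (y + L)) (1 / (x + L)) x := by
    have := ((hasDerivAt_id x).add_const L).log hxL.ne'
    simpa [one_div] using this
  have := h1.mul (h2.sub h3)
  refine this.congr_deriv ?_
  simp only [Pi.sub_apply]
  ring

private lemma aux_strictAnti {L : ℝ} (hL : 0 < L) :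
    StrictAntiOn (fun y : ℝ => (y - 1) * (Real.log y - Real.log (y + L))) (Set.Ici 1) := by
  apply strictAntiOn_of_deriv_neg (convex_Ici 1)
  · intro x hx
    have hx0 : (0:ℝ) < x := lt_of_lt_of_le one_pos hx
    exact ((aux_hasDerivAt hL hx0).continuousAt).continuousWithinAt
  · intro x hx
    rw [interior_Ici] at hx
    have hx1 : (1:ℝ) < x := hx
    have hx0 : (0:ℝ) < x := by linarith
    have hxL : 0 < x + L := by linarith
    rw [(aux_hasDerivAt hL hx0).deriv]
    have hpos : 0 < x / (x + L) := div_pos hx0 hxL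
    have hlog : Real.log x - Real.log (x + L) ≤ x / (x + L) - 1 := by
      rw [← Real.log_div hx0.ne' hxL.ne']
      exact Real.log_le_sub_one_of_pos hpos
    have hrat : x / (x + L) - 1 + (x - 1) * (1 / x - 1 / (x + L)) = -L / (x * (x + L)) := by
      field_simp
      ring
    have hneg : -L / (x * (x + L)) < 0 := by
      apply div_neg_of_neg_of_pos (by linarith) (by positivity)
    linarith

private lemma aux_lower {L : ℝ} (hL : 0 < L) {x : ℝ} (hx : 1 ≤ x) :
    -L < (x - 1) * (Real.log x - Real.log (x + L)) := by
  have hx0 : (0:ℝ) < x := lt_of_lt_of_le one_pos hx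
  have hxL : 0 < x + L := by linarith
  have hpos : 0 < (x + L) / x := div_pos hxL hx0
  have hlog : Real.log (x + L) - Real.log x ≤ (x + L) / x - 1 := by
    rw [← Real.log_div hxL.ne' hx0.ne']
    exact Real.log_le_sub_one_of_pos hpos
  have heq : (x + L) / x - 1 = L / x := by field_simp; ring
  rw [heq] at hlog
  have h1 : (x - 1) * (Real.log x - Real.log (x + L)) ≥ (x - 1) * (-(L / x)) := by
    apply mul_le_mul_of_nonneg_left (by linarith) (by linarith)
  have h2 : (x - 1) * (-(L / x)) = -(L * (x - 1) / x) := by ring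
  have h3 : L * (x - 1) / x < L := by
    rw [div_lt_iff₀ hx0]
    nlinarith
  linarith [h1, h2 ▸ h1]

private lemma aux_tendsto {L : ℝ} (hL : 0 < L) :
    Tendsto (fun x : ℝ => (x - 1) * (Real.log x - Real.log (x + L))) atTop (𝓝 (-L)) := by
  have h1 : Tendsto (fun x : ℝ => x * Real.log (1 + L / x)) atTop (𝓝 L) :=
    Real.tendsto_mul_log_one_add_div_atTop L
  have h2 : Tendsto (fun x : ℝ => Real.log (1 + L / x)) atTop (𝓝 0) := by
    have : Tendsto (fun x : ℝ => 1 + L / x) atTop (𝓝 1) := by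
      have h := ((tendsto_inv_atTop_zero (𝕜 := ℝ)).const_mul L).const_add (1:ℝ)
      simpa [div_eq_mul_inv] using h
    have := (Real.continuousAt_log (by norm_num : (1:ℝ) ≠ 0)).tendsto.comp this
    simpa [Function.comp_def] using this
  have h3 : Tendsto (fun x : ℝ => -(x * Real.log (1 + L / x)) + Real.log (1 + L / x))
      atTop (𝓝 (-L)) := by
    simpa using h1.neg.add h2
  apply h3.congr'
  filter_upwards [eventually_gt_atTop (0:ℝ)] with x hx0
  have hxL : 0 < x + L := by linarith
  have : Real.log x - Real.log (x + L) = -Real.log (1 + L / x) := by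
    rw [show (1:ℝ) + L / x = (x + L) / x by field_simp,
      Real.log_div hxL.ne' hx0.ne']
    ring
  rw [this]
  ring

/-- Let `L = 1 - 1/log 3` and `A x = (x/(x+L))^(x-1)` on `[1, ∞)`.
Then `A` is strictly decreasing on `[1, ∞)`, `exp (-L) < A x` for every `x ≥ 1`,
and the infimum of `A` over `[1, ∞)` equals `exp (-L)`. -/
theorem stmt_1 :
    StrictAntiOn (fun x : ℝ => (x / (x + (1 - 1 / Real.log 3))) ^ (x - 1)) (Set.Ici 1) ∧
    (∀ x : ℝ, 1 ≤ x →
      Real.exp (-(1 - 1 / Real.log 3)) < (x / (x + (1 - 1 / Real.log 3))) ^ (x - 1)) ∧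
    IsGLB ((fun x : ℝ => (x / (x + (1 - 1 / Real.log 3))) ^ (x - 1)) '' Set.Ici 1)
      (Real.exp (-(1 - 1 / Real.log 3))) := by
  set L : ℝ := 1 - 1 / Real.log 3 with hLdef
  have hlog3 : 1 < Real.log 3 := by
    rw [show (1:ℝ) = Real.log (Real.exp 1) by rw [Real.log_exp]]
    apply Real.log_lt_log (Real.exp_pos 1)
    calc Real.exp 1 < 2.7182818286 := Real.exp_one_lt_d9
      _ < 3 := by norm_num
  have hL : 0 < L := by
    have h1 : 1 / Real.log 3 < 1 := by
      rw [div_lt_one (by linarith)]; exact hlog3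
    simp only [hLdef]; linarith
  set g : ℝ → ℝ := fun x => (x - 1) * (Real.log x - Real.log (x + L)) with hgdef
  have hA : ∀ x ∈ Set.Ici (1:ℝ), (x / (x + L)) ^ (x - 1) = Real.exp (g x) := by
    intro x hx
    have hx0 : (0:ℝ) < x := lt_of_lt_of_le one_pos hx
    have hxL : 0 < x + L := by linarith
    rw [Real.rpow_def_of_pos (div_pos hx0 hxL), Real.log_div hx0.ne' hxL.ne']
    simp only [hgdef]; ring_nf
  have hanti : StrictAntiOn (fun x : ℝ => (x / (x + L)) ^ (x - 1)) (Set.Ici 1) := by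
    intro x hx y hy hxy
    simp only
    rw [hA x hx, hA y hy]
    exact Real.exp_lt_exp.2 (aux_strictAnti hL hx hy hxy)
  have hlow : ∀ x : ℝ, 1 ≤ x → Real.exp (-L) < (x / (x + L)) ^ (x - 1) := by
    intro x hx
    rw [hA x hx]
    exact Real.exp_lt_exp.2 (aux_lower hL hx)
  refine ⟨hanti, hlow, ?_, ?_⟩
  · rintro y ⟨x, hx, rfl⟩
    exact (hlow x hx).le
  · intro b hb
    by_contra hcon
    push_neg at hcon
    have htend : Tendsto (fun x : ℝ => Real.exp (g x)) atTop (𝓝 (Real.exp (-L))) :=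
      (Real.continuous_exp.tendsto _).comp (aux_tendsto hL)
    have hev : ∀ᶠ x : ℝ in atTop, Real.exp (g x) < b := htend.eventually_lt_const hcon
    obtain ⟨x, hx1, hx2⟩ := (hev.and (eventually_ge_atTop (1:ℝ))).exists
    have hmem : (x / (x + L)) ^ (x - 1) ∈
        (fun x : ℝ => (x / (x + L)) ^ (x - 1)) '' Set.Ici 1 := ⟨x, hx2, rfl⟩
    have := hb hmem
    rw [hA x hx2] at this
    linarith
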